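/- Let E be a solvable non-nilpotent evolution algebra over a field of characteristic ≠ 2 with one-dimensional derived subalgebra (so E ≅ E_k(λ_1,...,λ_n)). If dim E > 2, then E has a one-dimensional subalgebra that is not a quasi-ideal; consequently the subalgebra lattice of E is not modular. If dim E = 2, then E ≅ E_2(1,-1) and its subalgebra lattice is distributive. -/

import Mathlib

open Submodule

variable {K : Type} [Field K] {E : Type} [AddCommGroup E] [Module K E]

/-- The product of two submodules under a bilinear multiplication. -/
def mulSet (μ : E →ₗ[K] E →ₗ[K] E) (U V : Submodule K E) : Submodule K E :=
  Submodule.span K {z | ∃ u ∈ U, ∃ v ∈ V, z = μ u v}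

/-- Derived series starting from a submodule: `dser μ I 0 = I`,
`dser μ I (k+1) = (dser μ I k)·(dser μ I k)`.  Thus `dser μ ⊤ (k-1) = E^(k)`. -/
def dser (μ : E →ₗ[K] E →ₗ[K] E) (I : Submodule K E) : ℕ → Submodule K E
  | 0 => I
  | k + 1 => mulSet μ (dser μ I k) (dser μ I k)

/-- Lower central-type series: `lowerPow μ k = E^(k+1)` where
`E^1 = E` and `E^(k+1) = Σ_{i=1}^k E^i E^(k+1-i)`. -/
def lowerPow (μ : E →ₗ[K] E →ₗ[K] E) : ℕ → Submodule K E
  | 0 => ⊤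
  | k + 1 => ⨆ i : Fin (k + 1), mulSet μ (lowerPow μ i.1) (lowerPow μ (k - i.1))
  decreasing_by
  · exact i.2
  · omega

/-- A submodule closed under the multiplication. -/
def IsSubalg (μ : E →ₗ[K] E →ₗ[K] E) (U : Submodule K E) : Prop :=
  ∀ x ∈ U, ∀ y ∈ U, μ x y ∈ U

/-- A (two-sided) ideal. -/
def IsIdeal (μ : E →ₗ[K] E →ₗ[K] E) (I : Submodule K E) : Prop :=
  ∀ x ∈ I, ∀ y : E, μ x y ∈ I ∧ μ y x ∈ I

/-- Subalgebra generated by a set. -/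
def gen (μ : E →ₗ[K] E →ₗ[K] E) (s : Set E) : Submodule K E :=
  sInf {W | IsSubalg μ W ∧ s ⊆ W}

/-- Quasi-ideal: the subalgebra generated together with any subalgebra is the vector-space sum. -/
def QuasiIdeal (μ : E →ₗ[K] E →ₗ[K] E) (U : Submodule K E) : Prop :=
  IsSubalg μ U ∧ ∀ V : Submodule K E, IsSubalg μ V → gen μ (↑U ∪ ↑V) = U ⊔ V

/-- The subalgebra lattice is modular. -/
def ModularLat (μ : E →ₗ[K] E →ₗ[K] E) : Prop :=
  ∀ U V W : Submodule K E, IsSubalg μ U → IsSubalg μ V → IsSubalg μ W → U ≤ W →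
    gen μ (↑U ∪ ↑(V ⊓ W)) = gen μ (↑U ∪ ↑V) ⊓ W

/-- The subalgebra lattice is distributive. -/
def DistribLat (μ : E →ₗ[K] E →ₗ[K] E) : Prop :=
  ∀ U V W : Submodule K E, IsSubalg μ U → IsSubalg μ V → IsSubalg μ W →
    gen μ (↑U ∪ ↑(V ⊓ W)) = gen μ (↑U ∪ ↑V) ⊓ gen μ (↑U ∪ ↑W)

/-- Supersolvable: a complete flag of ideals. -/
def Supersolvable (μ : E →ₗ[K] E →ₗ[K] E) : Prop :=
  ∃ I : ℕ → Submodule K E, (∀ i, IsIdeal μ (I i)) ∧ (∀ i, I i ≤ I (i + 1)) ∧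
    (∀ i ≤ Module.finrank K E, Module.finrank K (I i) = i) ∧ I (Module.finrank K E) = ⊤

/-- Maximal subalgebra `A` of the subalgebra `B`. -/
def MaxIn (μ : E →ₗ[K] E →ₗ[K] E) (A B : Submodule K E) : Prop :=
  A ≤ B ∧ A ≠ B ∧ ∀ W : Submodule K E, IsSubalg μ W → A ≤ W → W ≤ B → W = A ∨ W = B


section aux
variable {K : Type} [Field K] {E : Type} [AddCommGroup E] [Module K E]

lemma mem_mulSet (μ : E →ₗ[K] E →ₗ[K] E) {U V : Submodule K E} {u v : E}
    (hu : u ∈ U) (hv : v ∈ V) : μ u v ∈ mulSet μ U V :=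
  subset_span ⟨u, hu, v, hv, rfl⟩

lemma mulSet_span_singleton (μ : E →ₗ[K] E →ₗ[K] E) (x y : E) :
    mulSet μ (span K {x}) (span K {y}) = span K {μ x y} := by
  apply le_antisymm
  · rw [mulSet, span_le]
    rintro z ⟨u, hu, v, hv, rfl⟩
    rw [mem_span_singleton] at hu hv
    obtain ⟨s, rfl⟩ := hu; obtain ⟨t, rfl⟩ := hv
    rw [SetLike.mem_coe, mem_span_singleton]
    exact ⟨s * t, by rw [map_smul, map_smul, LinearMap.smul_apply, smul_smul, mul_comm]⟩
  · rw [span_le, Set.singleton_subset_iff]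
    exact mem_mulSet μ (mem_span_singleton_self x) (mem_span_singleton_self y)

lemma gen_isSubalg (μ : E →ₗ[K] E →ₗ[K] E) (s : Set E) : IsSubalg μ (gen μ s) := by
  intro x hx y hy
  rw [gen, mem_sInf] at *
  intro W hW
  exact hW.1 x (hx W hW) y (hy W hW)

lemma subset_gen (μ : E →ₗ[K] E →ₗ[K] E) (s : Set E) : s ⊆ gen μ s := by
  intro x hx
  rw [gen, SetLike.mem_coe, mem_sInf]
  exact fun W hW => hW.2 hx

lemma gen_le (μ : E →ₗ[K] E →ₗ[K] E) {s : Set E} {W : Submodule K E}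
    (hW : IsSubalg μ W) (h : s ⊆ W) : gen μ s ≤ W :=
  sInf_le ⟨hW, h⟩

lemma span_le_gen (μ : E →ₗ[K] E →ₗ[K] E) (s : Set E) : span K s ≤ gen μ s :=
  span_le.mpr (subset_gen μ s)

lemma gen_union_eq (μ : E →ₗ[K] E →ₗ[K] E) {U V : Submodule K E}
    (h : IsSubalg μ (U ⊔ V)) : gen μ (↑U ∪ ↑V) = U ⊔ V := by
  apply le_antisymm
  · refine gen_le μ h (Set.union_subset_iff.mpr ⟨?_, ?_⟩)
    · exact fun x hx => le_sup_left (a := U) (b := V) hx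
    · exact fun x hx => le_sup_right (a := U) (b := V) hx
  · calc U ⊔ V = span K (↑U ∪ ↑V) := by rw [span_union, span_eq, span_eq]
    _ ≤ _ := span_le_gen μ _

lemma exists_gen [FiniteDimensional K E] {S : Submodule K E}
    (hS : Module.finrank K S = 1) : ∃ w : E, w ≠ 0 ∧ S = span K {w} := by
  have hne : S ≠ ⊥ := by
    intro h
    rw [h, finrank_bot] at hS
    exact one_ne_zero hS.symm
  obtain ⟨w, hwS, hw0⟩ := exists_mem_ne_zero_of_ne_bot hne
  refine ⟨w, hw0, ?_⟩
  have hle : span K {w} ≤ S := span_le.mpr (by simpa using hwS)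
  exact (Submodule.eq_of_le_of_finrank_le hle (by
    rw [hS, finrank_span_singleton hw0])).symm

lemma mu_expand (μ : E →ₗ[K] E →ₗ[K] E) (p q : K) (u v : E) :
    μ (p • u + q • v) (p • u + q • v) =
      (p*p) • μ u u + (p*q) • μ v u + (q*p) • μ u v + (q*q) • μ v v := by
  simp only [map_add, map_smul, LinearMap.add_apply, LinearMap.smul_apply, smul_add,
    smul_smul]
  abel

lemma ww_eq_zero (μ : E →ₗ[K] E →ₗ[K] E) {w : E} (hw0 : w ≠ 0)
    (hspan : dser μ ⊤ 1 = span K {w})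
    (hsolv : ∃ m : ℕ, dser μ ⊤ m = ⊥) : μ w w = 0 := by
  have hmem : μ w w ∈ span K {w} := by
    rw [← hspan]; exact mem_mulSet μ trivial trivial
  obtain ⟨k, hk⟩ := mem_span_singleton.mp hmem
  by_contra hne
  have hk0 : k ≠ 0 := fun h => hne (by rw [← hk, h, zero_smul])
  have hstep : ∀ m : ℕ, 1 ≤ m → dser μ ⊤ m = span K {w} := by
    intro m hm
    induction m with
    | zero => omega
    | succ m ih =>
      rcases Nat.eq_or_lt_of_le hm with h | h
      · exact h ▸ hspan
      · have hm' : 1 ≤ m := by omega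
        show mulSet μ (dser μ ⊤ m) (dser μ ⊤ m) = span K {w}
        rw [ih hm', mulSet_span_singleton, ← hk]
        exact span_singleton_smul_eq (Units.mk0 k hk0).isUnit w
  obtain ⟨m, hm⟩ := hsolv
  rcases Nat.eq_zero_or_pos m with rfl | hpos
  · have hw : w ∈ dser μ ⊤ 0 := trivial
    rw [hm] at hw
    exact hw0 (by simpa using hw)
  · have := hstep m hpos
    rw [hm] at this
    exact hw0 (by
      have : w ∈ (⊥ : Submodule K E) := this ▸ mem_span_singleton_self w
      simpa using this)

lemma nonnilp_exists (μ : E →ₗ[K] E →ₗ[K] E) {w : E}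
    (hspan : dser μ ⊤ 1 = span K {w})
    (hnonnilp : ¬ ∃ m : ℕ, lowerPow μ m = ⊥)
    (hcomm : ∀ x y : E, μ x y = μ y x) :
    ∃ x : E, μ x w ≠ 0 := by
  by_contra hno
  push_neg at hno
  apply hnonnilp
  refine ⟨2, ?_⟩
  have hlp0 : lowerPow μ 0 = (⊤ : Submodule K E) := by rw [lowerPow]
  have hmul : mulSet μ (⊤ : Submodule K E) ⊤ = span K {w} := hspan
  have hkillR : ∀ U : Submodule K E, mulSet μ U (span K {w}) ≤ ⊥ := by
    intro U
    rw [mulSet, span_le]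
    rintro z ⟨x, _, y, hy, rfl⟩
    obtain ⟨t, rfl⟩ := mem_span_singleton.mp hy
    simp [map_smul, hno x]
  have hkillL : ∀ U : Submodule K E, mulSet μ (span K {w}) U ≤ ⊥ := by
    intro U
    rw [mulSet, span_le]
    rintro z ⟨x, hx, y, _, rfl⟩
    obtain ⟨t, rfl⟩ := mem_span_singleton.mp hx
    rw [SetLike.mem_coe, mem_bot, hcomm]
    simp [map_smul, hno y]
  have hlow1 : lowerPow μ 1 = span K {w} := by
    rw [lowerPow]
    apply le_antisymm
    · apply iSup_le
      rintro ⟨i, hi⟩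
      have hi0 : i = 0 := by omega
      subst hi0
      simp only [Nat.sub_zero, hlp0]
      rw [hmul]
    · have := le_iSup (fun i : Fin (0+1) =>
        mulSet μ (lowerPow μ i.1) (lowerPow μ (0 - i.1))) ⟨0, by omega⟩
      simp only [Nat.sub_zero, hlp0] at this
      rw [hmul] at this
      exact this
  rw [lowerPow, eq_bot_iff]
  apply iSup_le
  rintro ⟨i, hi⟩
  have : i = 0 ∨ i = 1 := by omega
  rcases this with rfl | rfl
  · simp only [Nat.sub_zero]
    rw [hlow1]
    exact hkillR _
  · rw [show (1:ℕ) - 1 = 0 by rfl]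
    rw [hlow1]
    exact hkillL _

lemma mu_basis_w {n : ℕ} (μ : E →ₗ[K] E →ₗ[K] E) (b : Module.Basis (Fin n) K E)
    (hnat : ∀ i j : Fin n, i ≠ j → μ (b i) (b j) = 0)
    (w : E) (lam : Fin n → K) (hlam : ∀ i, μ (b i) (b i) = lam i • w)
    (i : Fin n) : μ (b i) w = ((b.repr w) i * lam i) • w := by
  conv_lhs => rw [← b.sum_repr w]
  rw [map_sum]
  rw [Finset.sum_eq_single i]
  · rw [map_smul, hlam, smul_smul]
  · intro j _ hj
    rw [map_smul, hnat i j (Ne.symm hj), smul_zero]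
  · intro h
    exact absurd (Finset.mem_univ i) h

lemma mu_x_w {n : ℕ} (μ : E →ₗ[K] E →ₗ[K] E) (b : Module.Basis (Fin n) K E)
    (hnat : ∀ i j : Fin n, i ≠ j → μ (b i) (b j) = 0)
    (w : E) (lam : Fin n → K) (hlam : ∀ i, μ (b i) (b i) = lam i • w)
    (x : E) : μ x w = (∑ i, b.repr x i * (b.repr w i * lam i)) • w := by
  conv_lhs => rw [← b.sum_repr x]
  rw [map_sum, LinearMap.sum_apply, Finset.sum_smul]
  apply Finset.sum_congr rfl
  intro i _
  rw [map_smul, LinearMap.smul_apply, mu_basis_w μ b hnat w lam hlam, smul_smul]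

end aux

/-- Core lemma for the `2 < n` branch. -/
lemma core (h2 : (2 : K) ≠ 0) (μ : E →ₗ[K] E →ₗ[K] E)
    (hcomm : ∀ x y : E, μ x y = μ y x)
    (w u v : E) (hw0 : w ≠ 0)
    (hμspan : ∀ x y : E, μ x y ∈ span K {w})
    (hww : μ w w = 0)
    (huu : μ u u = 0) (hvv : μ v v = 0) (huv : μ u v ≠ 0)
    (hu : u ∉ span K {w}) (hv : v ∉ span K {w}) :
    (∃ U : Submodule K E, IsSubalg μ U ∧ Module.finrank K U = 1 ∧
        ¬ QuasiIdeal μ U) ∧ ¬ ModularLat μ := by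
  have hu0 : u ≠ 0 := fun h => huv (by simp [h])
  have hv0 : v ≠ 0 := fun h => huv (by simp [h])
  -- μ u v = k • w with k ≠ 0
  obtain ⟨k, hk⟩ := mem_span_singleton.mp (hμspan u v)
  have hk0 : k ≠ 0 := fun h => huv (by rw [← hk, h, zero_smul])
  -- w ∉ span {u, v}
  have hwuv : w ∉ span K {u, v} := by
    intro hmem
    obtain ⟨p, q, hpq⟩ := mem_span_pair.mp hmem
    have hcalc : ((p*q+q*p)*k) • w = 0 := by
      rw [← hww]
      conv_rhs => rw [← hpq]
      rw [mu_expand, huu, hvv, hcomm v u, ← hk]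
      module
    have hsc : (p*q+q*p)*k = 0 := by
      rcases smul_eq_zero.mp hcalc with h | h
      · exact h
      · exact absurd h hw0
    have hpq0 : p * q = 0 := by
      have h2k : (2:K)*k ≠ 0 := mul_ne_zero h2 hk0
      have : (2*k)*(p*q) = 0 := by linear_combination hsc
      rcases mul_eq_zero.mp this with h | h
      · exact absurd h h2k
      · exact h
    rcases mul_eq_zero.mp hpq0 with rfl | rfl
    · -- w = q • v
      rw [zero_smul, zero_add] at hpq
      have hq0 : q ≠ 0 := fun h => hw0 (by rw [← hpq, h, zero_smul])
      exact hv (mem_span_singleton.mpr ⟨q⁻¹, by rw [← hpq, smul_smul, inv_mul_cancel₀ hq0, one_smul]⟩)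
    · rw [zero_smul, add_zero] at hpq
      have hp0 : p ≠ 0 := fun h => hw0 (by rw [← hpq, h, zero_smul])
      exact hu (mem_span_singleton.mpr ⟨p⁻¹, by rw [← hpq, smul_smul, inv_mul_cancel₀ hp0, one_smul]⟩)
  -- v ∉ span {u, w}
  have hvuw : v ∉ span K {u, w} := by
    intro hmem
    obtain ⟨p, q, hpq⟩ := mem_span_pair.mp hmem
    -- μ u v = q • μ u w ≠ 0 gives q ≠ 0 and μ u w ≠ 0
    have h1 : μ u v = q • μ u w := by rw [← hpq]; simp [huu]
    have hq0 : q ≠ 0 := fun h => huv (by rw [h1, h, zero_smul])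
    have huw0 : μ u w ≠ 0 := fun h => huv (by rw [h1, h, smul_zero])
    have h3 : (p*q+q*p) • μ u w = 0 := by
      rw [← hvv]
      conv_rhs => rw [← hpq]
      rw [mu_expand, huu, hww, hcomm w u]
      module
    have hsc : p*q+q*p = 0 := by
      rcases smul_eq_zero.mp h3 with h | h
      · exact h
      · exact absurd h huw0
    have hp0 : p = 0 := by
      have h2q : (2:K)*q ≠ 0 := mul_ne_zero h2 hq0
      have : (2*q)*p = 0 := by linear_combination hsc
      rcases mul_eq_zero.mp this with h | h
      · exact absurd h h2q
      · exact h
    rw [hp0, zero_smul, zero_add] at hpq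
    exact hv (mem_span_singleton.mpr ⟨q, hpq⟩)
  -- the subalgebras
  set U : Submodule K E := span K {u} with hUdef
  set V : Submodule K E := span K {v} with hVdef
  have hUalg : IsSubalg μ U := by
    intro x hx y hy
    obtain ⟨s, rfl⟩ := mem_span_singleton.mp hx
    obtain ⟨t, rfl⟩ := mem_span_singleton.mp hy
    simp only [map_smul, LinearMap.smul_apply, huu, smul_zero]
    exact zero_mem U
  have hValg : IsSubalg μ V := by
    intro x hx y hy
    obtain ⟨s, rfl⟩ := mem_span_singleton.mp hx
    obtain ⟨t, rfl⟩ := mem_span_singleton.mp hy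
    simp only [map_smul, LinearMap.smul_apply, hvv, smul_zero]
    exact zero_mem V
  -- w ∈ gen (U ∪ V)
  have hwgen : w ∈ gen μ (↑U ∪ ↑V) := by
    have hugen : u ∈ gen μ (↑U ∪ ↑V) :=
      subset_gen μ _ (Set.mem_union_left _ (mem_span_singleton_self u))
    have hvgen : v ∈ gen μ (↑U ∪ ↑V) :=
      subset_gen μ _ (Set.mem_union_right _ (mem_span_singleton_self v))
    have := gen_isSubalg μ (↑U ∪ ↑V) u hugen v hvgen
    rw [← hk] at this
    have := smul_mem _ k⁻¹ this
    rwa [smul_smul, inv_mul_cancel₀ hk0, one_smul] at this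
  have hUV : U ⊔ V = span K {u, v} := by
    rw [hUdef, hVdef, ← span_union, Set.singleton_union, Set.insert_eq]
  constructor
  · refine ⟨U, hUalg, finrank_span_singleton hu0, ?_⟩
    rintro ⟨-, hq⟩
    have := hq V hValg
    rw [this, hUV] at hwgen
    exact hwuv hwgen
  · intro hmod
    set W : Submodule K E := span K {u, w} with hWdef
    have hWalg : IsSubalg μ W := by
      intro x _ y _
      exact span_mono (by simp) (hμspan x y)
    have hUW : U ≤ W := span_mono (by simp)
    have heq := hmod U V W hUalg hValg hWalg hUW
    have hVW : V ⊓ W = ⊥ := by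
      rw [eq_bot_iff]
      rintro x ⟨hx1, hx2⟩
      obtain ⟨t, rfl⟩ := mem_span_singleton.mp hx1
      rcases eq_or_ne t 0 with rfl | ht
      · simp
      · exfalso
        exact hvuw (by
          have := smul_mem W t⁻¹ hx2
          rwa [smul_smul, inv_mul_cancel₀ ht, one_smul] at this)
    rw [hVW] at heq
    have hLHS : gen μ (↑U ∪ ↑(⊥ : Submodule K E)) = U := by
      apply le_antisymm
      · exact gen_le μ hUalg (by
          rw [Set.union_subset_iff]
          exact ⟨fun x hx => hx, by simp⟩)
      · intro x hx
        exact span_le_gen μ _ (by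
          rw [span_union, span_eq, span_eq (⊥ : Submodule K E), sup_bot_eq]; exact hx)
    rw [hLHS] at heq
    -- w ∈ RHS but w ∉ U
    have hwW : w ∈ W := subset_span (by simp)
    have hwU : w ∈ U := heq ▸ ⟨hwgen, hwW⟩
    obtain ⟨t, hturnedw⟩ := mem_span_singleton.mp hwU
    have ht : t ≠ 0 := fun h => hw0 (by rw [← hturnedw, h, zero_smul])
    exact hu (mem_span_singleton.mpr ⟨t⁻¹, by rw [← hturnedw, smul_smul, inv_mul_cancel₀ ht, one_smul]⟩)

section constr
variable {n : ℕ} (μ : E →ₗ[K] E →ₗ[K] E) (b : Module.Basis (Fin n) K E)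

theorem build_uv (h2 : (2 : K) ≠ 0)
    (hcomm : ∀ x y : E, μ x y = μ y x)
    (hnat : ∀ i j : Fin n, i ≠ j → μ (b i) (b j) = 0)
    (w : E) (hw0 : w ≠ 0) (lam : Fin n → K)
    (hlam : ∀ i, μ (b i) (b i) = lam i • w)
    (hbw : ∀ i, μ (b i) w = ((b.repr w) i * lam i) • w)
    (hww : μ w w = 0)
    (i0 i1 i2 : Fin n) (h01 : i0 ≠ i1) (h02 : i0 ≠ i2) (h12 : i1 ≠ i2)
    (ha0 : (b.repr w) i0 * lam i0 ≠ 0)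
    (ha1 : (b.repr w) i1 * lam i1 ≠ 0) :
    ∃ u v : E, μ u u = 0 ∧ μ v v = 0 ∧ μ u v ≠ 0 ∧
      u ∉ span K {w} ∧ v ∉ span K {w} := by
  set a0 : K := (b.repr w) i0 * lam i0 with ha0def
  set a1 : K := (b.repr w) i1 * lam i1 with ha1def
  set a2 : K := (b.repr w) i2 * lam i2 with ha2def
  have hwb : ∀ i, μ w (b i) = ((b.repr w) i * lam i) • w := fun i => by
    rw [hcomm]; exact hbw i
  have hn01 : μ (b i0) (b i1) = 0 := hnat _ _ h01
  have hn10 : μ (b i1) (b i0) = 0 := hnat _ _ h01.symm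
  have hn02 : μ (b i0) (b i2) = 0 := hnat _ _ h02
  have hn20 : μ (b i2) (b i0) = 0 := hnat _ _ h02.symm
  have hn12 : μ (b i1) (b i2) = 0 := hnat _ _ h12
  have hn21 : μ (b i2) (b i1) = 0 := hnat _ _ h12.symm
  -- u := λ₀ w - 2a₀ b i0
  set u : E := (lam i0) • w + (-(2*a0)) • b i0 with hudef
  have huu : μ u u = 0 := by
    simp only [hudef, map_add, map_smul, LinearMap.add_apply, LinearMap.smul_apply,
      hww, hwb, hbw, hlam, ← ha0def, smul_zero, smul_smul]
    module
  have hwu : μ w u = (-(2*(a0*a0))) • w := by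
    simp only [hudef, map_add, map_smul, hww, hwb, ← ha0def, smul_zero, smul_smul]
    module
  have huw : μ u w = (-(2*(a0*a0))) • w := by rw [hcomm]; exact hwu
  have h2a0 : (2:K)*(a0*a0) ≠ 0 := mul_ne_zero h2 (mul_ne_zero ha0 ha0)
  have hwu0 : μ w u ≠ 0 := by
    rw [hwu]
    intro h
    rcases smul_eq_zero.mp h with h | h
    · exact h2a0 (neg_eq_zero.mp h)
    · exact hw0 h
  have hunw : u ∉ span K {w} := by
    intro hmem
    obtain ⟨s, hs⟩ := mem_span_singleton.mp hmem
    exact hwu0 (by rw [← hs, map_smul, hww, smul_zero])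
  -- e := a₂ b i1 - a₁ b i2
  set e : E := a2 • b i1 + (-a1) • b i2 with hedef
  have hwe : μ w e = 0 := by
    simp only [hedef, map_add, map_smul, hwb, ← ha1def, ← ha2def, smul_smul]
    module
  have hew : μ e w = 0 := by rw [hcomm]; exact hwe
  have hb0e : μ (b i0) e = 0 := by
    simp only [hedef, map_add, map_smul, hn01, hn02, smul_zero, add_zero]
  have hue : μ u e = 0 := by
    simp only [hudef, map_add, map_smul, LinearMap.add_apply, LinearMap.smul_apply,
      hwe, hb0e, smul_zero, add_zero]
  have heu : μ e u = 0 := by rw [hcomm]; exact hue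
  -- Q' := q(e)
  set Q : K := a2*a2*lam i1 + a1*a1*lam i2 with hQdef
  have hee : μ e e = Q • w := by
    simp only [hedef, map_add, map_smul, LinearMap.add_apply, LinearMap.smul_apply,
      hlam, hn12, hn21, smul_zero, smul_smul, hQdef]
    module
  -- e ≠ 0
  have he0 : e ≠ 0 := by
    intro h
    have hre : b.repr e i2 = -a1 := by
      rw [hedef]
      simp [Finsupp.single_apply, h12]
    rw [h, map_zero] at hre
    simp only [Finsupp.coe_zero, Pi.zero_apply] at hre
    exact ha1 (neg_eq_zero.mp hre.symm)
  rcases eq_or_ne Q 0 with hQ0 | hQ0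
  · -- v := w + e
    refine ⟨u, w + e, huu, ?_, ?_, hunw, ?_⟩
    · simp only [map_add, LinearMap.add_apply, hww, hwe, hew, hee, hQ0, zero_smul,
        add_zero, zero_add]
    · rw [map_add, huw, hue, add_zero]
      intro h
      rcases smul_eq_zero.mp h with h | h
      · exact h2a0 (neg_eq_zero.mp h)
      · exact hw0 h
    · intro hmem
      obtain ⟨s, hs⟩ := mem_span_singleton.mp hmem
      have he' : e = (s - 1) • w := by
        have : e = s • w - w := by rw [hs]; abel
        rw [this, sub_smul, one_smul]
      have := hb0e
      rw [he', map_smul, hbw, ← ha0def, smul_smul] at this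
      rcases smul_eq_zero.mp this with h | h
      · have hs1 : s = 1 := by
          rcases mul_eq_zero.mp h with h' | h'
          · exact sub_eq_zero.mp h'
          · exact absurd h' ha0
        rw [hs1, sub_self, zero_smul] at he'
        exact he0 he'
      · exact hw0 h
  · -- v := α w + (u + e), α = Q/(4a₀²)
    have h4a0 : (4:K)*(a0*a0) ≠ 0 := by
      have h4 : (4:K) ≠ 0 := by
        intro h
        apply mul_ne_zero h2 h2
        rw [show (2:K)*2 = 4 by norm_num, h]
      exact mul_ne_zero h4 (mul_ne_zero ha0 ha0)
    set α : K := Q * ((4:K)*(a0*a0))⁻¹ with hαdef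
    have hα0 : α ≠ 0 := mul_ne_zero hQ0 (inv_ne_zero h4a0)
    set z : E := u + e with hzdef
    have hzz : μ z z = Q • w := by
      rw [hzdef]
      simp only [map_add, LinearMap.add_apply, huu, hue, heu, hee, zero_add, add_zero]
    have hwz : μ w z = (-(2*(a0*a0))) • w := by
      rw [hzdef, map_add, hwu, hwe, add_zero]
    have hzw : μ z w = (-(2*(a0*a0))) • w := by rw [hcomm]; exact hwz
    have huz : μ u z = 0 := by
      rw [hzdef, map_add, huu, hue, add_zero]
    have hQeq : Q = α * (4*(a0*a0)) := by
      rw [hαdef, mul_assoc, inv_mul_cancel₀ h4a0, mul_one]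
    refine ⟨u, α • w + z, huu, ?_, ?_, hunw, ?_⟩
    · simp only [map_add, map_smul, LinearMap.add_apply, LinearMap.smul_apply,
        hww, hwz, hzw, hzz, smul_zero, smul_smul, zero_add]
      rw [hQeq]
      module
    · rw [map_add, map_smul, huw, huz, add_zero, smul_smul]
      intro h
      rcases smul_eq_zero.mp h with h | h
      · rcases mul_eq_zero.mp h with h' | h'
        · exact hα0 h'
        · exact h2a0 (neg_eq_zero.mp h')
      · exact hw0 h
    · intro hmem
      obtain ⟨s, hs⟩ := mem_span_singleton.mp hmem
      have : μ w (α • w + z) = (s • 0 : E) := by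
        rw [← hs, map_smul, hww]
      rw [map_add, map_smul, hww, smul_zero, zero_add, hwz, smul_zero] at this
      rcases smul_eq_zero.mp this with h | h
      · exact h2a0 (neg_eq_zero.mp h)
      · exact hw0 h
end constr

theorem build_f (h2 : (2 : K) ≠ 0) (μ : E →ₗ[K] E →ₗ[K] E)
    (b : Module.Basis (Fin 2) K E)
    (hnat : ∀ i j : Fin 2, i ≠ j → μ (b i) (b j) = 0)
    (w : E) (hw0 : w ≠ 0) (lam : Fin 2 → K)
    (hlam : ∀ i, μ (b i) (b i) = lam i • w)
    (hq : (b.repr w) 0 * ((b.repr w) 0 * lam 0) + (b.repr w) 1 * ((b.repr w) 1 * lam 1) = 0)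
    (ha : ∀ i, (b.repr w) i * lam i ≠ 0) :
    ∃ f : Module.Basis (Fin 2) K E, (∀ i j : Fin 2, i ≠ j → μ (f i) (f j) = 0) ∧
      μ (f 0) (f 0) = f 0 + f 1 ∧ μ (f 1) (f 1) = -(f 0 + f 1) := by
  set c0 : K := (b.repr w) 0 with hc0
  set c1 : K := (b.repr w) 1 with hc1
  set l0 : K := lam 0 with hl0
  set l1 : K := lam 1 with hl1
  have ha0 : c0 * l0 ≠ 0 := ha 0
  have ha1 : c1 * l1 ≠ 0 := ha 1
  have hc0' : c0 ≠ 0 := fun h => ha0 (by rw [h, zero_mul])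
  have hc1' : c1 ≠ 0 := fun h => ha1 (by rw [h, zero_mul])
  have hl0' : l0 ≠ 0 := fun h => ha0 (by rw [h, mul_zero])
  have hl1' : l1 ≠ 0 := fun h => ha1 (by rw [h, mul_zero])
  -- w in terms of the basis
  have wexp : w = c0 • b 0 + c1 • b 1 := by
    conv_lhs => rw [← b.sum_repr w]
    rw [Fin.sum_univ_two]
  set t0 : K := (c0 * l0)⁻¹ with ht0
  set t1 : K := c1 * ((c0 * l0) * c0)⁻¹ with ht1
  have ht0' : t0 ≠ 0 := inv_ne_zero ha0
  have ht1' : t1 ≠ 0 := mul_ne_zero hc1' (inv_ne_zero (mul_ne_zero ha0 hc0'))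
  -- the scalar identities
  have e1 : t0 * t0 * l0 * c0 = t0 := by rw [ht0]; field_simp
  have e2 : t0 * t0 * l0 * c1 = t1 := by rw [ht0, ht1]; field_simp
  have e3 : t1 * t1 * l1 * c0 = -t0 := by
    rw [ht0, ht1]; field_simp; linear_combination hq
  have e4 : t1 * t1 * l1 * c1 = -t1 := by
    rw [ht1]; field_simp; linear_combination hq
  -- the basis
  set tu : Fin 2 → Kˣ := ![Units.mk0 t0 ht0', Units.mk0 t1 ht1'] with htu
  set f : Module.Basis (Fin 2) K E := b.unitsSMul tu with hf
  have hf0 : f 0 = t0 • b 0 := by rw [hf, Module.Basis.unitsSMul_apply]; rfl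
  have hf1 : f 1 = t1 • b 1 := by rw [hf, Module.Basis.unitsSMul_apply]; rfl
  refine ⟨f, ?_, ?_, ?_⟩
  · intro i j hij
    fin_cases i <;> fin_cases j
    · exact absurd rfl hij
    · show μ (f 0) (f 1) = 0
      rw [hf0, hf1]
      simp only [map_smul, LinearMap.smul_apply]
      rw [hnat 0 1 (by decide), smul_zero, smul_zero]
    · show μ (f 1) (f 0) = 0
      rw [hf0, hf1]
      simp only [map_smul, LinearMap.smul_apply]
      rw [hnat 1 0 (by decide), smul_zero, smul_zero]
    · exact absurd rfl hij
  · rw [hf0, hf1]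
    simp only [map_smul, LinearMap.smul_apply]
    rw [hlam 0, ← hl0, wexp]
    match_scalars
    · linear_combination e1
    · linear_combination e2
  · rw [hf0, hf1]
    simp only [map_smul, LinearMap.smul_apply]
    rw [hlam 1, ← hl1, wexp]
    match_scalars
    · linear_combination e3
    · linear_combination e4

theorem distrib_two (h2 : (2 : K) ≠ 0) (μ : E →ₗ[K] E →ₗ[K] E)
    (b : Module.Basis (Fin 2) K E)
    (hnat : ∀ i j : Fin 2, i ≠ j → μ (b i) (b j) = 0)
    (w : E) (hw0 : w ≠ 0) (lam : Fin 2 → K)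
    (hlam : ∀ i, μ (b i) (b i) = lam i • w)
    (hμspan : ∀ x y : E, μ x y ∈ span K {w})
    (hq : (b.repr w) 0 * ((b.repr w) 0 * lam 0) + (b.repr w) 1 * ((b.repr w) 1 * lam 1) = 0)
    (ha : ∀ i, (b.repr w) i * lam i ≠ 0) :
    DistribLat μ := by
  haveI : Module.Finite K E := Module.Finite.of_basis b
  set c0 : K := (b.repr w) 0 with hc0
  set c1 : K := (b.repr w) 1 with hc1
  set l0 : K := lam 0 with hl0
  set l1 : K := lam 1 with hl1
  have ha0 : c0 * l0 ≠ 0 := ha 0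
  have ha1 : c1 * l1 ≠ 0 := ha 1
  have hc0' : c0 ≠ 0 := fun h => ha0 (by rw [h, zero_mul])
  have hc1' : c1 ≠ 0 := fun h => ha1 (by rw [h, zero_mul])
  have hl0' : l0 ≠ 0 := fun h => ha0 (by rw [h, mul_zero])
  have hl1' : l1 ≠ 0 := fun h => ha1 (by rw [h, mul_zero])
  have hn01 : μ (b 0) (b 1) = 0 := hnat 0 1 (by decide)
  have hn10 : μ (b 1) (b 0) = 0 := hnat 1 0 (by decide)
  have wexp : w = c0 • b 0 + c1 • b 1 := by
    conv_lhs => rw [← b.sum_repr w]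
    rw [Fin.sum_univ_two]
  set z : E := c0 • b 0 + (-c1) • b 1 with hzdef
  have hrz0 : b.repr z 0 = c0 := by
    rw [hzdef]; simp [Finsupp.single_apply]
  have hrz1 : b.repr z 1 = -c1 := by
    rw [hzdef]; simp [Finsupp.single_apply]
  have hz0 : z ≠ 0 := by
    intro h
    apply hc0'
    rw [← hrz0, h]
    simp
  have hzz : μ z z = 0 := by
    rw [hzdef]
    simp only [map_add, map_smul, LinearMap.add_apply, LinearMap.smul_apply,
      hlam 0, hlam 1, hn01, hn10, ← hl0, ← hl1, smul_zero]
    match_scalars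
    linear_combination hq
  have hrankE : Module.finrank K E = 2 := by
    rw [Module.finrank_eq_card_basis b, Fintype.card_fin]
  -- subalgebra facts
  have halgbot : IsSubalg μ (⊥ : Submodule K E) := by
    intro x hx y hy
    rw [mem_bot] at hx
    subst hx
    simp
  have halgge : ∀ X : Submodule K E, span K {w} ≤ X → IsSubalg μ X :=
    fun X hX x _ y _ => hX (hμspan x y)
  have halgA : IsSubalg μ (span K {w}) := halgge _ le_rfl
  have halgtop : IsSubalg μ (⊤ : Submodule K E) := halgge _ le_top
  have halgB : IsSubalg μ (span K {z}) := by
    intro x hx y hy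
    obtain ⟨s, rfl⟩ := mem_span_singleton.mp hx
    obtain ⟨t, rfl⟩ := mem_span_singleton.mp hy
    simp only [map_smul, LinearMap.smul_apply, hzz, smul_zero]
    exact zero_mem _
  -- lattice facts
  have hABinf : span K {w} ⊓ span K {z} = ⊥ := by
    rw [eq_bot_iff]
    rintro x ⟨hx1, hx2⟩
    obtain ⟨s, hs⟩ := mem_span_singleton.mp hx1
    obtain ⟨t, ht⟩ := mem_span_singleton.mp hx2
    have hst := hs.trans ht.symm
    have e0 : s * c0 = t * c0 := by
      have := congrArg (fun v => b.repr v 0) hst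
      simpa [map_smul, hrz0, ← hc0] using this
    have e1 : s * c1 = t * (-c1) := by
      have := congrArg (fun v => b.repr v 1) hst
      simpa [map_smul, hrz1, ← hc1] using this
    have hst' : s = t := mul_right_cancel₀ hc0' e0
    have h2c1s : (2 * c1) * s = 0 := by linear_combination e1 + c1 * hst'
    have hs0 : s = 0 := by
      rcases mul_eq_zero.mp h2c1s with h | h
      · exact absurd h (mul_ne_zero h2 hc1')
      · exact h
    rw [mem_bot, ← hs, hs0, zero_smul]
  have hBAinf : span K {z} ⊓ span K {w} = ⊥ := by rw [inf_comm]; exact hABinf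
  have hABsup : span K {w} ⊔ span K {z} = ⊤ := by
    rw [eq_top_iff, ← b.span_eq, span_le]
    rintro x ⟨i, rfl⟩
    have hb0 : b 0 = ((2*c0)⁻¹ * 1) • w + ((2*c0)⁻¹ * 1) • z := by
      rw [wexp, hzdef]
      match_scalars <;> (field_simp; try ring)
    have hb1 : b 1 = ((2*c1)⁻¹ * 1) • w + (-(2*c1)⁻¹ * 1) • z := by
      rw [wexp, hzdef]
      match_scalars <;> (field_simp; try ring)
    fin_cases i
    · show b 0 ∈ ↑(span K {w} ⊔ span K {z})
      rw [hb0]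
      exact add_mem (smul_mem _ _ (mem_sup_left (mem_span_singleton_self w)))
        (smul_mem _ _ (mem_sup_right (mem_span_singleton_self z)))
    · show b 1 ∈ ↑(span K {w} ⊔ span K {z})
      rw [hb1]
      exact add_mem (smul_mem _ _ (mem_sup_left (mem_span_singleton_self w)))
        (smul_mem _ _ (mem_sup_right (mem_span_singleton_self z)))
  have hBAsup : span K {z} ⊔ span K {w} = ⊤ := by rw [sup_comm]; exact hABsup
  -- classification
  have hclass : ∀ U : Submodule K E, IsSubalg μ U →
      U = ⊥ ∨ U = span K {w} ∨ U = span K {z} ∨ U = ⊤ := by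
    intro U hU
    have hle : Module.finrank K U ≤ 2 := hrankE ▸ U.finrank_le
    have h012 : Module.finrank K U = 0 ∨ Module.finrank K U = 1 ∨
        Module.finrank K U = 2 := by omega
    rcases h012 with h | h | h
    · exact Or.inl (Submodule.finrank_eq_zero.mp h)
    · obtain ⟨x, hx0, hxspan⟩ := exists_gen h
      have hxmem : x ∈ U := hxspan ▸ mem_span_singleton_self x
      have hxx : μ x x ∈ U := hU x hxmem x hxmem
      rw [hxspan] at hxx
      obtain ⟨k, hk⟩ := mem_span_singleton.mp hxx
      set x0 : K := b.repr x 0 with hx0def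
      set x1 : K := b.repr x 1 with hx1def
      have xexp : x = x0 • b 0 + x1 • b 1 := by
        conv_lhs => rw [← b.sum_repr x]
        rw [Fin.sum_univ_two]
      have hxxval : μ x x = (x0*(x0*l0) + x1*(x1*l1)) • w := by
        conv_lhs => rw [xexp]
        simp only [map_add, map_smul, LinearMap.add_apply, LinearMap.smul_apply,
          hlam 0, hlam 1, hn01, hn10, ← hl0, ← hl1, smul_zero]
        match_scalars
        ring
      rcases eq_or_ne k 0 with rfl | hk0
      · -- q(x) = 0 : x is parallel to w or z
        have hQx : x0*(x0*l0) + x1*(x1*l1) = 0 := by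
          have : (x0*(x0*l0) + x1*(x1*l1)) • w = 0 := by
            rw [← hxxval, ← hk, zero_smul]
          rcases smul_eq_zero.mp this with h' | h'
          · exact h'
          · exact absurd h' hw0
        have hfact : l0 * (x0*c1 - x1*c0) * (x0*c1 + x1*c0) = 0 := by
          linear_combination (c1*c1)*hQx - (x1*x1)*hq
        have hx00 : x0 ≠ 0 := by
          intro hx00
          rcases mul_eq_zero.mp (by linear_combination hQx - x0*l0*hx00 : x1 * (x1 * l1) = 0) with h' | h'
          · apply hx0
            rw [xexp, hx00, h', zero_smul, zero_smul, add_zero]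
          · rcases mul_eq_zero.mp h' with h'' | h''
            · apply hx0
              rw [xexp, hx00, h'', zero_smul, zero_smul, add_zero]
            · exact hl1' h''
        have hs0 : x0 * c0⁻¹ ≠ 0 := mul_ne_zero hx00 (inv_ne_zero hc0')
        rcases mul_eq_zero.mp hfact with h' | h'
        · rcases mul_eq_zero.mp h' with h'' | h''
          · exact absurd h'' hl0'
          · -- x ∥ w
            have hxw : x = (x0 * c0⁻¹) • w := by
              rw [xexp, wexp]
              match_scalars
              · field_simp
              · field_simp
                linear_combination -(sub_eq_zero.mp h'')
            right; left
            rw [hxspan]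
            apply le_antisymm
            · rw [span_le, Set.singleton_subset_iff, SetLike.mem_coe, hxw]
              exact smul_mem _ _ (mem_span_singleton_self w)
            · rw [span_le, Set.singleton_subset_iff, SetLike.mem_coe]
              exact mem_span_singleton.mpr ⟨(x0 * c0⁻¹)⁻¹, by
                rw [hxw, smul_smul, inv_mul_cancel₀ hs0, one_smul]⟩
        · -- x ∥ z
          have hxz : x = (x0 * c0⁻¹) • z := by
            rw [xexp, hzdef]
            match_scalars
            · field_simp
            · field_simp
              linear_combination h'
          right; right; left
          rw [hxspan]
          apply le_antisymm
          · rw [span_le, Set.singleton_subset_iff, SetLike.mem_coe, hxz]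
            exact smul_mem _ _ (mem_span_singleton_self z)
          · rw [span_le, Set.singleton_subset_iff, SetLike.mem_coe]
            exact mem_span_singleton.mpr ⟨(x0 * c0⁻¹)⁻¹, by
              rw [hxz, smul_smul, inv_mul_cancel₀ hs0, one_smul]⟩
      · -- k ≠ 0 : x ∈ span w
        have hxw : x = (k⁻¹ * (x0*(x0*l0) + x1*(x1*l1))) • w := by
          rw [mul_smul, ← hxxval, ← hk, smul_smul, inv_mul_cancel₀ hk0, one_smul]
        have hs0 : k⁻¹ * (x0*(x0*l0) + x1*(x1*l1)) ≠ 0 := by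
          intro h'
          exact hx0 (by rw [hxw, h', zero_smul])
        right; left
        rw [hxspan]
        apply le_antisymm
        · rw [span_le, Set.singleton_subset_iff, SetLike.mem_coe, hxw]
          exact smul_mem _ _ (mem_span_singleton_self w)
        · rw [span_le, Set.singleton_subset_iff, SetLike.mem_coe]
          exact mem_span_singleton.mpr ⟨(k⁻¹ * (x0*(x0*l0) + x1*(x1*l1)))⁻¹, by
            rw [hxw, smul_smul, inv_mul_cancel₀ hs0, one_smul]⟩
    · exact Or.inr (Or.inr (Or.inr (Submodule.eq_top_of_finrank_eq (h.trans hrankE.symm))))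
  -- generated subalgebra of a union is the sup
  have hgen : ∀ X Y : Submodule K E,
      (X = ⊥ ∨ X = span K {w} ∨ X = span K {z} ∨ X = ⊤) →
      (Y = ⊥ ∨ Y = span K {w} ∨ Y = span K {z} ∨ Y = ⊤) →
      gen μ (↑X ∪ ↑Y) = X ⊔ Y := by
    intro X Y hX hY
    apply gen_union_eq μ
    rcases hX with rfl | rfl | rfl | rfl <;> rcases hY with rfl | rfl | rfl | rfl <;>
      simp only [sup_bot_eq, bot_sup_eq, sup_top_eq, top_sup_eq, sup_idem,
        hABsup, hBAsup] <;>
      first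
        | exact halgbot
        | exact halgA
        | exact halgB
        | exact halgtop
  have hinfmem : ∀ X Y : Submodule K E,
      (X = ⊥ ∨ X = span K {w} ∨ X = span K {z} ∨ X = ⊤) →
      (Y = ⊥ ∨ Y = span K {w} ∨ Y = span K {z} ∨ Y = ⊤) →
      ((X ⊓ Y) = ⊥ ∨ (X ⊓ Y) = span K {w} ∨ (X ⊓ Y) = span K {z} ∨ (X ⊓ Y) = ⊤) := by
    intro X Y hX hY
    rcases hX with rfl | rfl | rfl | rfl <;> rcases hY with rfl | rfl | rfl | rfl <;>
      simp [inf_bot_eq, bot_inf_eq, inf_top_eq, top_inf_eq, inf_idem,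
        hABinf, hBAinf]
  -- the distributivity
  intro U V W hU hV hW
  have hUc := hclass U hU
  have hVc := hclass V hV
  have hWc := hclass W hW
  rw [hgen U (V ⊓ W) hUc (hinfmem V W hVc hWc), hgen U V hUc hVc, hgen U W hUc hWc]
  rcases hUc with rfl | rfl | rfl | rfl <;> rcases hVc with rfl | rfl | rfl | rfl <;>
    rcases hWc with rfl | rfl | rfl | rfl <;>
    simp [hABsup, hBAsup, hABinf, hBAinf]


/-- let `E` be a solvable non-nilpotent evolution algebra (char ≠ 2) with
one-dimensional derived subalgebra.  If `dim E > 2`, then `E` has a one-dimensional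
subalgebra which is not a quasi-ideal, so the subalgebra lattice is not modular.  If
`dim E = 2`, then `E ≅ E₂(1,-1)` (it admits a natural basis `f` with `f₁² = f₁+f₂`,
`f₂² = -(f₁+f₂)`) and the subalgebra lattice is distributive. -/
theorem stmt17 {n : ℕ} (h2 : (2 : K) ≠ 0)
    (μ : E →ₗ[K] E →ₗ[K] E)
    (hcomm : ∀ x y : E, μ x y = μ y x)
    (b : Module.Basis (Fin n) K E)
    (hnat : ∀ i j : Fin n, i ≠ j → μ (b i) (b j) = 0)
    (hsolv : ∃ m : ℕ, dser μ ⊤ m = ⊥)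
    (hnonnilp : ¬ ∃ m : ℕ, lowerPow μ m = ⊥)
    (hder : Module.finrank K (dser μ (⊤ : Submodule K E) 1) = 1) :
    (2 < n →
      (∃ U : Submodule K E, IsSubalg μ U ∧ Module.finrank K U = 1 ∧
        ¬ QuasiIdeal μ U) ∧ ¬ ModularLat μ) ∧
    (n = 2 →
      (∃ f : Module.Basis (Fin 2) K E, (∀ i j : Fin 2, i ≠ j → μ (f i) (f j) = 0) ∧
        μ (f 0) (f 0) = f 0 + f 1 ∧ μ (f 1) (f 1) = -(f 0 + f 1)) ∧
      DistribLat μ) := by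
  haveI : Module.Finite K E := Module.Finite.of_basis b
  obtain ⟨w, hw0, hspan⟩ := exists_gen hder
  have hμspan : ∀ x y : E, μ x y ∈ span K {w} := fun x y => by
    rw [← hspan]; exact mem_mulSet μ trivial trivial
  have hlamex : ∀ i : Fin n, ∃ k : K, k • w = μ (b i) (b i) :=
    fun i => mem_span_singleton.mp (hμspan _ _)
  choose lam hlam' using hlamex
  have hlam : ∀ i, μ (b i) (b i) = lam i • w := fun i => (hlam' i).symm
  have hbw : ∀ i, μ (b i) w = ((b.repr w) i * lam i) • w :=
    mu_basis_w μ b hnat w lam hlam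
  have hww : μ w w = 0 := ww_eq_zero μ hw0 hspan hsolv
  have hsum : ∀ x : E, μ x w = (∑ i, b.repr x i * (b.repr w i * lam i)) • w :=
    mu_x_w μ b hnat w lam hlam
  have sumzero : (∑ i, b.repr w i * (b.repr w i * lam i)) = 0 := by
    have h := hsum w
    rw [hww] at h
    rcases smul_eq_zero.mp h.symm with h' | h'
    · exact h'
    · exact absurd h' hw0
  obtain ⟨x, hx⟩ := nonnilp_exists μ hspan hnonnilp hcomm
  have hsum_ne : (∑ i, b.repr x i * (b.repr w i * lam i)) ≠ 0 :=
    fun h => hx (by rw [hsum x, h, zero_smul])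
  obtain ⟨i0, -, hi0⟩ := Finset.exists_ne_zero_of_sum_ne_zero hsum_ne
  have ha0 : b.repr w i0 * lam i0 ≠ 0 := fun h => hi0 (by rw [h, mul_zero])
  have hc0 : b.repr w i0 ≠ 0 := fun h => ha0 (by rw [h, zero_mul])
  have hi1ex : ∃ i1, i1 ≠ i0 ∧ b.repr w i1 * lam i1 ≠ 0 := by
    by_contra hcon
    push_neg at hcon
    have hone : (∑ i, b.repr w i * (b.repr w i * lam i))
        = b.repr w i0 * (b.repr w i0 * lam i0) := by
      refine Finset.sum_eq_single i0 (fun j _ hj => ?_) (fun h => absurd (Finset.mem_univ i0) h)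
      rw [hcon j hj, mul_zero]
    rw [sumzero] at hone
    exact (mul_ne_zero hc0 ha0) hone.symm
  obtain ⟨i1, h10, ha1⟩ := hi1ex
  constructor
  · -- 2 < n
    intro hn
    have hi2ex : ∃ i2 : Fin n, i2 ≠ i0 ∧ i2 ≠ i1 := by
      by_contra hcon
      push_neg at hcon
      have hsub : (Finset.univ : Finset (Fin n)) ⊆ {i0, i1} := by
        intro i _
        rcases eq_or_ne i i0 with rfl | h
        · exact Finset.mem_insert_self _ _
        · rw [hcon i h]
          exact Finset.mem_insert_of_mem (Finset.mem_singleton_self _)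
      have hcard := Finset.card_le_card hsub
      rw [Finset.card_univ, Fintype.card_fin] at hcard
      have : ({i0, i1} : Finset (Fin n)).card ≤ 2 := by
        apply le_trans (Finset.card_insert_le _ _)
        rw [Finset.card_singleton]
      omega
    obtain ⟨i2, h20, h21⟩ := hi2ex
    obtain ⟨u, v, huu, hvv, huv, hu, hv⟩ :=
      build_uv μ b h2 hcomm hnat w hw0 lam hlam hbw hww i0 i1 i2
        h10.symm h20.symm h21.symm ha0 ha1
    exact core h2 μ hcomm w u v hw0 hμspan hww huu hvv huv hu hv
  · -- n = 2
    intro hn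
    subst hn
    have hall : ∀ i : Fin 2, i = i0 ∨ i = i1 := by
      intro i
      have h01v : i0.val ≠ i1.val := fun h => h10.symm (Fin.ext h)
      have hiv : i.val < 2 := i.2
      have h0v : i0.val < 2 := i0.2
      have h1v : i1.val < 2 := i1.2
      rcases (by omega : i.val = i0.val ∨ i.val = i1.val) with h | h
      · exact Or.inl (Fin.ext h)
      · exact Or.inr (Fin.ext h)
    have ha : ∀ i : Fin 2, b.repr w i * lam i ≠ 0 := by
      intro i
      rcases hall i with rfl | rfl
      · exact ha0
      · exact ha1
    have hq2 : (b.repr w) 0 * ((b.repr w) 0 * lam 0)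
        + (b.repr w) 1 * ((b.repr w) 1 * lam 1) = 0 := by
      have := sumzero
      rw [Fin.sum_univ_two] at this
      exact this
    exact ⟨build_f h2 μ b hnat w hw0 lam hlam hq2 ha,
      distrib_two h2 μ b hnat w hw0 lam hlam hμspan hq2 ha⟩
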